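/- Let p_f : ℝ → EuclideanSpace ℝ (Fin 3) be twice differentiable near s₀ := s_f(t₀) with ‖p_f'(s)‖ = 1 for all s and k(s) := ‖p_f''(s)‖ ≠ 0 for s near s₀, and suppose n(s) := p_f''(s)/k(s) is differentiable at s₀. Let p : ℝ → ℝ³ be differentiable at t₀ with v(t₀) := p'(t₀), let s_f : ℝ → ℝ be differentiable at t₀, and assume the transversality condition ⟪t(s_f(t)), p(t) − p_f(s_f(t))⟫ = 0 holds for all t in a neighborhood of t₀. Then the transverse coordinate w₁ is differentiable at t₀ and w₁'(t₀) = ⟪n(s₀), v(t₀)⟫ + τ(s₀) s_f'(t₀) w₂(t₀), where τ(s₀) := ⟪b(s₀), n'(s₀)⟫. -/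

import Mathlib

open scoped RealInnerProductSpace Matrix

/-- Cross product on `EuclideanSpace ℝ (Fin 3)`. -/
noncomputable def cross3 (u v : EuclideanSpace ℝ (Fin 3)) : EuclideanSpace ℝ (Fin 3) :=
  (WithLp.equiv 2 (Fin 3 → ℝ)).symm
    ![u 1 * v 2 - u 2 * v 1, u 2 * v 0 - u 0 * v 2, u 0 * v 1 - u 1 * v 0]

/-- Tangent vector of an arc-length parameterized curve. -/
noncomputable def tang (p_f : ℝ → EuclideanSpace ℝ (Fin 3)) (s : ℝ) : EuclideanSpace ℝ (Fin 3) :=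
  deriv p_f s

/-- Curvature. -/
noncomputable def curv (p_f : ℝ → EuclideanSpace ℝ (Fin 3)) (s : ℝ) : ℝ :=
  ‖deriv (deriv p_f) s‖

/-- Normal vector. -/
noncomputable def nor (p_f : ℝ → EuclideanSpace ℝ (Fin 3)) (s : ℝ) : EuclideanSpace ℝ (Fin 3) :=
  (curv p_f s)⁻¹ • deriv (deriv p_f) s

/-- Binormal vector. -/
noncomputable def binor (p_f : ℝ → EuclideanSpace ℝ (Fin 3)) (s : ℝ) : EuclideanSpace ℝ (Fin 3) :=
  cross3 (tang p_f s) (nor p_f s)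

/-- Torsion: `τ(s) = ⟪b(s), n'(s)⟫`. -/
noncomputable def tors (p_f : ℝ → EuclideanSpace ℝ (Fin 3)) (s : ℝ) : ℝ :=
  ⟪binor p_f s, deriv (nor p_f) s⟫

/-- First transverse coordinate `w₁(t) = ⟪n(s_f(t)), p(t) − p_f(s_f(t))⟫`. -/
noncomputable def w1 (p_f p : ℝ → EuclideanSpace ℝ (Fin 3)) (s_f : ℝ → ℝ) (t : ℝ) : ℝ :=
  ⟪nor p_f (s_f t), p t - p_f (s_f t)⟫

/-- Second transverse coordinate `w₂(t) = ⟪b(s_f(t)), p(t) − p_f(s_f(t))⟫`. -/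
noncomputable def w2 (p_f p : ℝ → EuclideanSpace ℝ (Fin 3)) (s_f : ℝ → ℝ) (t : ℝ) : ℝ :=
  ⟪binor p_f (s_f t), p t - p_f (s_f t)⟫

lemma key3 (a c m u : EuclideanSpace ℝ (Fin 3)) (ha : ⟪a,a⟫ = 1) (hc : ⟪c,c⟫ = 1)
    (hd : ⟪a,c⟫ = 0) :
    ⟪m,u⟫ = ⟪a,m⟫*⟪a,u⟫ + ⟪c,m⟫*⟪c,u⟫ + ⟪cross3 a c, m⟫*⟪cross3 a c, u⟫ := by
  simp only [cross3, PiLp.inner_apply, RCLike.inner_apply, conj_trivial,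
    Fin.sum_univ_three, WithLp.equiv_symm_apply, PiLp.toLp_apply, Matrix.cons_val_zero,
    Matrix.cons_val_one, Matrix.head_cons, Matrix.cons_val_two, Matrix.tail_cons] at *
  linear_combination
    ((c 0*m 0+c 1*m 1+c 2*m 2)*(c 0*u 0+c 1*u 1+c 2*u 2) - (m 0*u 0+m 1*u 1+m 2*u 2)) * ha +
    ((a 0*m 0+a 1*m 1+a 2*m 2)*(a 0*u 0+a 1*u 1+a 2*u 2)
      - (a 0*a 0+a 1*a 1+a 2*a 2)*(m 0*u 0+m 1*u 1+m 2*u 2)) * hc +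
    ((a 0*c 0+a 1*c 1+a 2*c 2)*(m 0*u 0+m 1*u 1+m 2*u 2)
      - (a 0*m 0+a 1*m 1+a 2*m 2)*(c 0*u 0+c 1*u 1+c 2*u 2)
      - (c 0*m 0+c 1*m 1+c 2*m 2)*(a 0*u 0+a 1*u 1+a 2*u 2)) * hd

theorem transverse_coordinate_w1_dynamics
    (p_f p : ℝ → EuclideanSpace ℝ (Fin 3)) (s_f : ℝ → ℝ) (t₀ : ℝ)
    (hd1 : ∀ᶠ s in nhds (s_f t₀), DifferentiableAt ℝ p_f s)
    (hd2 : ∀ᶠ s in nhds (s_f t₀), DifferentiableAt ℝ (deriv p_f) s)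
    (hunit : ∀ s : ℝ, ‖deriv p_f s‖ = 1)
    (hk : ∀ᶠ s in nhds (s_f t₀), curv p_f s ≠ 0)
    (hn : DifferentiableAt ℝ (nor p_f) (s_f t₀))
    (hp : DifferentiableAt ℝ p t₀)
    (hsf : DifferentiableAt ℝ s_f t₀)
    (htrans : ∀ᶠ t in nhds t₀, ⟪tang p_f (s_f t), p t - p_f (s_f t)⟫ = 0) :
    DifferentiableAt ℝ (w1 p_f p s_f) t₀ ∧
      deriv (w1 p_f p s_f) t₀ =
        ⟪nor p_f (s_f t₀), deriv p t₀⟫ +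
          tors p_f (s_f t₀) * deriv s_f t₀ * w2 p_f p s_f t₀ := by
  have hpf0 : DifferentiableAt ℝ p_f (s_f t₀) := hd1.self_of_nhds
  have ht0 : DifferentiableAt ℝ (deriv p_f) (s_f t₀) := hd2.self_of_nhds
  have hk0 : curv p_f (s_f t₀) ≠ 0 := hk.self_of_nhds
  have hkpos : 0 < curv p_f (s_f t₀) := lt_of_le_of_ne (norm_nonneg _) (Ne.symm hk0)
  -- ⟪t', t⟫ = 0 at (s_f t₀)
  have htt' : ⟪deriv p_f (s_f t₀), deriv (deriv p_f) (s_f t₀)⟫ = 0 := by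
    have h1 : HasDerivAt (fun s => ⟪deriv p_f s, deriv p_f s⟫)
        (⟪deriv p_f (s_f t₀), deriv (deriv p_f) (s_f t₀)⟫ + ⟪deriv (deriv p_f) (s_f t₀), deriv p_f (s_f t₀)⟫) (s_f t₀) :=
      HasDerivAt.inner ℝ ht0.hasDerivAt ht0.hasDerivAt
    have h2 : (fun s => ⟪deriv p_f s, deriv p_f s⟫) = fun _ : ℝ => (1:ℝ) := by
      funext s
      rw [real_inner_self_eq_norm_mul_norm, hunit s]; norm_num
    rw [h2] at h1
    have h3 := h1.unique (hasDerivAt_const (s_f t₀) (1:ℝ))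
    have h4 : ⟪deriv (deriv p_f) (s_f t₀), deriv p_f (s_f t₀)⟫ = ⟪deriv p_f (s_f t₀), deriv (deriv p_f) (s_f t₀)⟫ :=
      real_inner_comm _ _
    linarith [h3, h4.symm ▸ h3]
  have hTT : ⟪tang p_f (s_f t₀), tang p_f (s_f t₀)⟫ = 1 := by
    rw [tang, real_inner_self_eq_norm_mul_norm, hunit]; norm_num
  have hTN : ⟪tang p_f (s_f t₀), nor p_f (s_f t₀)⟫ = 0 := by
    rw [tang, nor, real_inner_smul_right, htt', mul_zero]
  -- ‖n s‖ = 1 eventually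
  have hnorm : ∀ᶠ s in nhds (s_f t₀), ⟪nor p_f s, nor p_f s⟫ = (1:ℝ) := by
    filter_upwards [hk] with s hks
    have : ‖nor p_f s‖ = 1 := by
      rw [nor, norm_smul, norm_inv, Real.norm_eq_abs, curv,
        abs_of_nonneg (norm_nonneg _)]
      rw [curv] at hks
      exact inv_mul_cancel₀ hks
    rw [real_inner_self_eq_norm_mul_norm, this]; norm_num
  have hNN : ⟪nor p_f (s_f t₀), nor p_f (s_f t₀)⟫ = 1 := hnorm.self_of_nhds
  -- ⟪n, n'⟫ = 0
  have hNN' : ⟪nor p_f (s_f t₀), deriv (nor p_f) (s_f t₀)⟫ = 0 := by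
    have h1 : HasDerivAt (fun s => ⟪nor p_f s, nor p_f s⟫)
        (⟪nor p_f (s_f t₀), deriv (nor p_f) (s_f t₀)⟫ + ⟪deriv (nor p_f) (s_f t₀), nor p_f (s_f t₀)⟫) (s_f t₀) :=
      HasDerivAt.inner ℝ hn.hasDerivAt hn.hasDerivAt
    have h2 : HasDerivAt (fun s => ⟪nor p_f s, nor p_f s⟫) 0 (s_f t₀) :=
      (hasDerivAt_const (s_f t₀) (1:ℝ)).congr_of_eventuallyEq hnorm
    have h3 := h1.unique h2
    have h4 : ⟪deriv (nor p_f) (s_f t₀), nor p_f (s_f t₀)⟫ = ⟪nor p_f (s_f t₀), deriv (nor p_f) (s_f t₀)⟫ :=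
      real_inner_comm _ _
    linarith [h3, h4 ▸ h3]
  -- derivative of u := p - p_f ∘ s_f
  have hu : HasDerivAt (fun t => p t - p_f (s_f t))
      (deriv p t₀ - deriv s_f t₀ • deriv p_f (s_f t₀)) t₀ :=
    hp.hasDerivAt.sub (HasDerivAt.scomp (h := s_f) (x := t₀) hpf0.hasDerivAt hsf.hasDerivAt)
  have hns : HasDerivAt (fun t => nor p_f (s_f t))
      (deriv s_f t₀ • deriv (nor p_f) (s_f t₀)) t₀ :=
    HasDerivAt.scomp (h := s_f) (x := t₀) hn.hasDerivAt hsf.hasDerivAt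
  have hw1 : HasDerivAt (w1 p_f p s_f)
      (⟪nor p_f (s_f t₀), deriv p t₀ - deriv s_f t₀ • deriv p_f (s_f t₀)⟫ +
        ⟪deriv s_f t₀ • deriv (nor p_f) (s_f t₀), p t₀ - p_f (s_f t₀)⟫) t₀ :=
    HasDerivAt.inner ℝ hns hu
  refine ⟨hw1.differentiableAt, ?_⟩
  rw [hw1.deriv]
  have hTu : ⟪tang p_f (s_f t₀), p t₀ - p_f (s_f t₀)⟫ = 0 := htrans.self_of_nhds
  have hdec := key3 (tang p_f (s_f t₀)) (nor p_f (s_f t₀)) (deriv (nor p_f) (s_f t₀)) (p t₀ - p_f (s_f t₀))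
    hTT hNN hTN
  rw [hTu, hNN'] at hdec
  have hb : binor p_f (s_f t₀) = cross3 (tang p_f (s_f t₀)) (nor p_f (s_f t₀)) := rfl
  rw [inner_sub_right, real_inner_smul_right, real_inner_smul_left, tang] at *
  rw [tors, w2, hb]
  have hNT : ⟪nor p_f (s_f t₀), deriv p_f (s_f t₀)⟫ = 0 := by
    rw [real_inner_comm]; exact hTN
  rw [hNT, inner_sub_right]
  linear_combination (deriv s_f t₀) * hdec
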